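/- Let G be a discrete finitely generated group, Σ a finite alphabet, and x ∈ Σ^G a Toeplitz array. Then x admits a period structure: there exists a decreasing sequence (Γ_n)_{n≥0} of finite-index subgroups of G such that each Γ_n is an essential group of periods of x and ⋃_{n≥0} Per(x, Γ_n) = G. -/

import Mathlib

open Pointwise MeasureTheory

/-- The (left) shift action of `G` on `K^G`: `(γ • x) g = x (g γ)`. -/
instance shiftMulAction (G K : Type*) [Group G] : MulAction G (G → K) where
  smul γ x := fun g => x (g * γ)
  one_smul x := funext fun g => congrArg x (mul_one g)
  mul_smul γ δ x := funext fun g => (congrArg x (mul_assoc g γ δ)).symm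

/-- `Per(x, Γ, σ) = {g ∈ G : x (g γ) = σ for all γ ∈ Γ}`. -/
def PerSet {G A : Type*} [Group G] (x : G → A) (Γ : Subgroup G) (σ : A) : Set G :=
  {g : G | ∀ γ ∈ Γ, x (g * γ) = σ}

/-- `Per(x, Γ) = ⋃_σ Per(x, Γ, σ)`. -/
def Per {G A : Type*} [Group G] (x : G → A) (Γ : Subgroup G) : Set G :=
  ⋃ σ : A, PerSet x Γ σ

/-- `x` is a `G`-Toeplitz array if every `g ∈ G` belongs to `Per(x, Γ)` for some
finite-index subgroup `Γ`. -/
def IsToeplitz {G A : Type*} [Group G] (x : G → A) : Prop :=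
  ∀ g : G, ∃ Γ : Subgroup G, Γ.FiniteIndex ∧ g ∈ Per x Γ

/-- `Γ` is an essential group of periods of `x`: every `g ∈ G` with
`Per(x, Γ, σ) ⊆ Per(g • x, Γ, σ)` for all `σ` belongs to `Γ`. -/
def IsEssentialPeriodGroup {G A : Type*} [Group G] (x : G → A) (Γ : Subgroup G) : Prop :=
  ∀ g : G, (∀ σ : A, PerSet x Γ σ ⊆ PerSet (g • x) Γ σ) → g ∈ Γ

namespace Aux16

variable {G A : Type*} [Group G]

lemma perSet_anti (x : G → A) {Δ' Δ : Subgroup G} (hle : Δ' ≤ Δ) (σ : A) :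
    PerSet x Δ σ ⊆ PerSet x Δ' σ := fun _ hh γ hγ => hh γ (hle hγ)

lemma per_anti (x : G → A) {Δ' Δ : Subgroup G} (hle : Δ' ≤ Δ) :
    Per x Δ ⊆ Per x Δ' := by
  intro g hg
  obtain ⟨σ, hσ⟩ := Set.mem_iUnion.mp hg
  exact Set.mem_iUnion.mpr ⟨σ, perSet_anti x hle σ hσ⟩

/-- The carrier of the essential hull. -/
def EC (x : G → A) (Δ : Subgroup G) : Set G :=
  {g : G | ∀ σ : A, PerSet x Δ σ ⊆ PerSet (g • x) Δ σ}

lemma mem_EC {x : G → A} {Δ : Subgroup G} {g : G} :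
    g ∈ EC x Δ ↔ ∀ σ : A, ∀ h ∈ PerSet x Δ σ, ∀ γ ∈ Δ, x (h * γ * g) = σ :=
  Iff.rfl

lemma perSet_rightmul {x : G → A} {Δ : Subgroup G} (hn : Δ.Normal) {g h : G} {σ : A}
    (hg : g ∈ EC x Δ) (hh : h ∈ PerSet x Δ σ) : h * g ∈ PerSet x Δ σ := by
  intro γ hγ
  have key := mem_EC.mp hg σ h hh (g * γ * g⁻¹) (hn.conj_mem γ hγ g)
  have eq : h * (g * γ * g⁻¹) * g = h * g * γ := by group
  rwa [eq] at key

lemma perSet_rightmul_inv {x : G → A} {Δ : Subgroup G} (hn : Δ.Normal)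
    (hfi : Δ.FiniteIndex) {g h : G} {σ : A}
    (hg : g ∈ EC x Δ) (hh : h ∈ PerSet x Δ σ) : h * g⁻¹ ∈ PerSet x Δ σ := by
  haveI := hfi
  haveI : Finite (G ⧸ Δ) := Subgroup.finite_quotient_of_finiteIndex
  -- the map `q ↦ q * g` on the quotient
  have hrel : ∀ a b : G, (QuotientGroup.leftRel Δ).r a b →
      (QuotientGroup.leftRel Δ).r (a * g) (b * g) := by
    intro a b hab
    rw [QuotientGroup.leftRel_apply] at hab ⊢
    have eq : (a * g)⁻¹ * (b * g) = g⁻¹ * (a⁻¹ * b) * g⁻¹⁻¹ := by group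
    rw [eq]
    exact hn.conj_mem _ hab g⁻¹
  set f : G ⧸ Δ → G ⧸ Δ := Quotient.map' (· * g) hrel with hf
  have hfmk : ∀ a : G, f (a : G ⧸ Δ) = ((a * g : G) : G ⧸ Δ) := fun a => rfl
  have hinj : Function.Injective f := by
    intro q₁ q₂
    refine Quotient.inductionOn₂' q₁ q₂ ?_
    intro a b hab
    rw [show (Quotient.mk'' a : G ⧸ Δ) = (a : G ⧸ Δ) from rfl,
      show (Quotient.mk'' b : G ⧸ Δ) = (b : G ⧸ Δ) from rfl] at hab ⊢
    rw [hfmk, hfmk, QuotientGroup.eq] at hab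
    rw [QuotientGroup.eq]
    have eq : a⁻¹ * b = g * ((a * g)⁻¹ * (b * g)) * g⁻¹ := by group
    rw [eq]
    exact hn.conj_mem _ hab g
  set S : Set (G ⧸ Δ) := QuotientGroup.mk '' PerSet x Δ σ with hS
  have hmaps : Set.MapsTo f S S := by
    rintro q ⟨a, ha, rfl⟩
    exact ⟨a * g, perSet_rightmul hn hg ha, (hfmk a).symm⟩
  have hbij : Set.BijOn f S S :=
    ((Set.toFinite S).injOn_iff_bijOn_of_mapsTo hmaps).mp hinj.injOn
  obtain ⟨q, hq, hfq⟩ := hbij.surjOn ⟨h, hh, rfl⟩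
  obtain ⟨h', hh', rfl⟩ := hq
  rw [hfmk, QuotientGroup.eq] at hfq
  -- `h * g⁻¹ = h' * (g * δ * g⁻¹)` with `δ = (h' * g)⁻¹ * h ∈ Δ`
  have hmem : h * g⁻¹ ∈ PerSet x Δ σ := by
    intro γ hγ
    have hδ : g * ((h' * g)⁻¹ * h) * g⁻¹ * γ ∈ Δ :=
      Subgroup.mul_mem _ (hn.conj_mem _ hfq g) hγ
    have := hh' _ hδ
    have eq : h' * (g * ((h' * g)⁻¹ * h) * g⁻¹ * γ) = h * g⁻¹ * γ := by group
    rwa [eq] at this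
  exact hmem

/-- The essential hull of a normal finite-index subgroup, as a subgroup. -/
def Esub (x : G → A) (Δ : Subgroup G) (hn : Δ.Normal) (hfi : Δ.FiniteIndex) :
    Subgroup G where
  carrier := EC x Δ
  one_mem' := by
    rw [mem_EC]
    intro σ h hh γ hγ
    rw [mul_one]
    exact hh γ hγ
  mul_mem' := by
    intro a b ha hb
    rw [mem_EC] at *
    intro σ h hh γ hγ
    have h1 : h * γ ∈ PerSet x Δ σ := by
      intro γ' hγ'
      rw [mul_assoc]
      exact hh _ (Subgroup.mul_mem _ hγ hγ')
    have h2 : h * γ * a ∈ PerSet x Δ σ := perSet_rightmul hn (mem_EC.mpr ha) h1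
    have := hb σ _ h2 1 (Subgroup.one_mem Δ)
    rw [mul_one] at this
    rw [← mul_assoc]
    exact this
  inv_mem' := by
    intro a ha
    rw [mem_EC] at *
    intro σ h hh γ hγ
    have h2 : h * a⁻¹ ∈ PerSet x Δ σ := perSet_rightmul_inv hn hfi (mem_EC.mpr ha) hh
    have := h2 (a * γ * a⁻¹) (hn.conj_mem γ hγ a)
    have eq : h * a⁻¹ * (a * γ * a⁻¹) = h * γ * a⁻¹ := by group
    rwa [eq] at this

lemma mem_Esub {x : G → A} {Δ : Subgroup G} {hn : Δ.Normal} {hfi : Δ.FiniteIndex} {g : G} :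
    g ∈ Esub x Δ hn hfi ↔ g ∈ EC x Δ := Iff.rfl

lemma le_Esub {x : G → A} {Δ : Subgroup G} (hn : Δ.Normal) (hfi : Δ.FiniteIndex) :
    Δ ≤ Esub x Δ hn hfi := by
  intro g hg
  rw [mem_Esub, mem_EC]
  intro σ h hh γ hγ
  rw [mul_assoc]
  exact hh _ (Subgroup.mul_mem _ hγ hg)

lemma perSet_subset_Esub {x : G → A} {Δ : Subgroup G} (hn : Δ.Normal) (hfi : Δ.FiniteIndex)
    (σ : A) : PerSet x Δ σ ⊆ PerSet x (Esub x Δ hn hfi) σ := by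
  intro h hh γ' hγ'
  have := perSet_rightmul hn (mem_Esub.mp hγ') hh 1 (Subgroup.one_mem Δ)
  rwa [mul_one] at this

lemma per_subset_Esub {x : G → A} {Δ : Subgroup G} (hn : Δ.Normal) (hfi : Δ.FiniteIndex) :
    Per x Δ ⊆ Per x (Esub x Δ hn hfi) := by
  intro g hg
  obtain ⟨σ, hσ⟩ := Set.mem_iUnion.mp hg
  exact Set.mem_iUnion.mpr ⟨σ, perSet_subset_Esub hn hfi σ hσ⟩

lemma Esub_mono {x : G → A} {Δ' Δ : Subgroup G} (hn' : Δ'.Normal) (hfi' : Δ'.FiniteIndex)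
    (hn : Δ.Normal) (hfi : Δ.FiniteIndex) (hle : Δ' ≤ Δ) :
    Esub x Δ' hn' hfi' ≤ Esub x Δ hn hfi := by
  intro g hg
  rw [mem_Esub, mem_EC] at *
  intro σ h hh γ hγ
  have h1 : h * γ ∈ PerSet x Δ' σ := by
    intro γ' hγ'
    rw [mul_assoc]
    exact hh _ (Subgroup.mul_mem _ hγ (hle hγ'))
  have := hg σ _ h1 1 (Subgroup.one_mem Δ')
  rwa [mul_one] at this

end Aux16

open Aux16 in
/-- Corollary `estructura`: every Toeplitz array admits a period
structure: a decreasing sequence of finite-index essential groups of periods `(Γₙ)` with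
`⋃ₙ Per(x, Γₙ) = G`. -/
theorem statement16 {G A : Type*} [Group G] [Group.FG G] [Finite A]
    (x : G → A) (hx : IsToeplitz x) :
    ∃ Γ : ℕ → Subgroup G,
      (∀ n, Γ (n + 1) ≤ Γ n) ∧ (∀ n, (Γ n).FiniteIndex) ∧
      (∀ n, IsEssentialPeriodGroup x (Γ n)) ∧
      (⋃ n, Per x (Γ n)) = Set.univ := by
  -- `G` is countable
  haveI : Countable G := by
    obtain ⟨S, hS, hSfin⟩ := Group.fg_iff.mp ‹_›
    haveI : Countable S := hSfin.countable
    haveI := Classical.decEq S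
    haveI : Countable (FreeGroup S) :=
      Function.Injective.countable FreeGroup.toWord_injective
    have hsurj : Function.Surjective (FreeGroup.lift (Subtype.val : S → G)) := by
      rw [← MonoidHom.range_eq_top, FreeGroup.range_lift_eq_closure, Subtype.range_coe]
      exact hS
    exact hsurj.countable
  obtain ⟨e, he⟩ := exists_surjective_nat G
  -- for each `n`, a normal finite-index subgroup with `e n` periodic
  have key : ∀ n : ℕ, ∃ N : Subgroup G, N.Normal ∧ N.FiniteIndex ∧ e n ∈ Per x N := by
    intro n
    obtain ⟨Γ, hΓfi, hmem⟩ := hx (e n)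
    haveI := hΓfi
    exact ⟨Γ.normalCore, Subgroup.normalCore_normal Γ, Subgroup.finiteIndex_normalCore Γ,
      per_anti x (Subgroup.normalCore_le Γ) hmem⟩
  choose N hNnorm hNfi hNmem using key
  set D : ℕ → Subgroup G := fun n => ⨅ i ∈ Finset.range (n + 1), N i with hD
  have hDnorm : ∀ n, (D n).Normal := by
    intro n
    constructor
    intro a ha g
    simp only [hD, Subgroup.mem_iInf] at ha ⊢
    intro i hi
    exact (hNnorm i).conj_mem a (ha i hi) g
  have hDfi : ∀ n, (D n).FiniteIndex := fun n =>
    Subgroup.finiteIndex_iInf' _ (fun i _ => hNfi i)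
  have hDanti : ∀ n, D (n + 1) ≤ D n := by
    intro n
    exact biInf_mono fun i hi =>
      Finset.mem_range.mpr (lt_trans (Finset.mem_range.mp hi) (Nat.lt_succ_self _))
  have hDle : ∀ n, D n ≤ N n := fun n => biInf_le _ (Finset.self_mem_range_succ n)
  refine ⟨fun n => Esub x (D n) (hDnorm n) (hDfi n), ?_, ?_, ?_, ?_⟩
  · intro n
    exact Esub_mono _ _ _ _ (hDanti n)
  · intro n
    exact Subgroup.finiteIndex_of_le (le_Esub (hDnorm n) (hDfi n))
  · intro n g hgsub
    rw [mem_Esub, mem_EC]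
    intro σ h hh γ hγ
    exact hgsub σ (perSet_subset_Esub (hDnorm n) (hDfi n) σ hh) γ
      (le_Esub (hDnorm n) (hDfi n) hγ)
  · refine Set.eq_univ_of_forall fun g => ?_
    obtain ⟨n, rfl⟩ := he g
    exact Set.mem_iUnion.mpr
      ⟨n, per_subset_Esub (hDnorm n) (hDfi n) (per_anti x (hDle n) (hNmem n))⟩
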